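/- Let V ⊆ ℤ^n be a finite set whose cardinality |V| = p is a prime number, and let L ⊆ ℤ^n be a tiling of ℤ^n by translates of V. Then for any v, w ∈ V, the vector p·(v − w) is a period of the tiling, i.e., L + p·(v − w) = L. -/

import Mathlib

/-- A set `L ⊆ ℤ^n` tiles `ℤ^n` by translates of `V` if every `x ∈ ℤ^n` has a unique
representation `x = v + l` with `v ∈ V` and `l ∈ L`. -/
def IsTiling {n : ℕ} (V L : Set (Fin n → ℤ)) : Prop :=
  ∀ x : Fin n → ℤ, ∃! p : (Fin n → ℤ) × (Fin n → ℤ),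
    p.1 ∈ V ∧ p.2 ∈ L ∧ x = p.1 + p.2

section Aux

set_option linter.unusedSectionVars false

variable {q : ℕ} {G : Type*} [AddCommGroup G]

/-- Pairing of an element of the group algebra with a function. -/
noncomputable def Phi (f : G → ZMod q) (B : AddMonoidAlgebra (ZMod q) G) : ZMod q :=
  B.coeff.sum fun g c => c * f g

lemma Phi_apply (f : G → ZMod q) (B : AddMonoidAlgebra (ZMod q) G) :
    Phi f B = ∑ g ∈ B.coeff.support, B.coeff g * f g := rfl

lemma Phi_single (f : G → ZMod q) (a : G) (b : ZMod q) :
    Phi f (AddMonoidAlgebra.single a b) = b * f a :=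
  Finsupp.sum_single_index (by simp)

lemma Phi_finset_sum (f : G → ZMod q) {ι : Type*} (s : Finset ι)
    (g : ι → AddMonoidAlgebra (ZMod q) G) :
    Phi f (∑ i ∈ s, g i) = ∑ i ∈ s, Phi f (g i) :=
  by unfold Phi; rw [AddMonoidAlgebra.coeff_sum]; exact (Finsupp.sum_finset_sum_index (by simp) (by intros; ring)).symm

lemma mul_single_one_eq (B : AddMonoidAlgebra (ZMod q) G) (v : G) :
    B * AddMonoidAlgebra.single v 1 = AddMonoidAlgebra.ofCoeff (Finsupp.mapDomain (· + v) B.coeff) := by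
  ext g
  rw [AddMonoidAlgebra.coeff_mul_single_apply, mul_one, show g = (g - v) + v by abel, AddMonoidAlgebra.coeff_ofCoeff,
    Finsupp.mapDomain_apply (add_left_injective v)]
  simp [sub_eq_add_neg]

lemma Phi_mul_single (f : G → ZMod q) (B : AddMonoidAlgebra (ZMod q) G) (v : G) :
    Phi f (B * AddMonoidAlgebra.single v 1) = Phi (fun g => f (g + v)) B := by
  rw [mul_single_one_eq, Phi, AddMonoidAlgebra.coeff_ofCoeff, Finsupp.sum_mapDomain_index_inj (add_left_injective v)]
  rfl

lemma Phi_mul_A (f : G → ZMod q) (C : AddMonoidAlgebra (ZMod q) G)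
    (V : Finset G) :
    Phi f (C * ∑ v ∈ V, AddMonoidAlgebra.single v (1 : ZMod q)) =
      ∑ v ∈ V, Phi (fun g => f (g + v)) C := by
  rw [Finset.mul_sum, Phi_finset_sum]
  exact Finset.sum_congr rfl fun v _ => Phi_mul_single f C v

end Aux

/-- If `|V| = p` is prime and `L` tiles `ℤ^n` by translates of `V`, then `p·(v − w)` is a
period of the tiling for all `v, w ∈ V`. -/
theorem prime_tile_period {n : ℕ} (V : Finset (Fin n → ℤ)) (p : ℕ) (hp : p.Prime)
    (hcard : V.card = p) (L : Set (Fin n → ℤ)) (hL : IsTiling (V : Set (Fin n → ℤ)) L)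
    (v w : Fin n → ℤ) (hv : v ∈ V) (hw : w ∈ V) :
    ∀ x : Fin n → ℤ, x ∈ L ↔ x + (p : ℤ) • (v - w) ∈ L := by
  classical
  haveI : Fact p.Prime := ⟨hp⟩
  -- The key counting fact: for each x, the number of u ∈ V with x - p•u ∈ L is 0 mod p,
  -- hence it is 0 or p; in either case membership is independent of the choice of u ∈ V.
  have key : ∀ x : Fin n → ℤ, ∀ v' ∈ V, ∀ w' ∈ V,
      (x - p • v' ∈ L ↔ x - p • w' ∈ L) := by
    intro x
    set f : (Fin n → ℤ) → ZMod p := fun g => if x - g ∈ L then 1 else 0 with hf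
    -- tiling property: for every y, exactly one u ∈ V with y - u ∈ L
    have tile : ∀ y : Fin n → ℤ, (V.filter (fun u => y - u ∈ L)).card = 1 := by
      intro y
      obtain ⟨⟨u, l⟩, ⟨hu, hl, hy⟩, huniq⟩ := hL y
      simp only at hu hl hy
      rw [Finset.card_eq_one]
      refine ⟨u, Finset.eq_singleton_iff_unique_mem.2 ⟨?_, ?_⟩⟩
      · simp only [Finset.mem_filter]
        refine ⟨by simpa using hu, ?_⟩
        rw [hy]
        simpa using hl
      · intro b hb
        simp only [Finset.mem_filter] at hb
        have := huniq (b, y - b) ⟨by simpa using hb.1, hb.2, by rw [add_comm, sub_add_cancel]⟩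
        exact (congrArg Prod.fst this)
    have tile' : ∀ y : Fin n → ℤ, ∑ u ∈ V, f (y + u) = 1 := by
      intro y
      have h1 : ∑ u ∈ V, f (y + u) =
          ((V.filter (fun u => (x - y) - u ∈ L)).card : ZMod p) := by
        rw [Finset.card_filter, Nat.cast_sum]
        refine Finset.sum_congr rfl fun u _ => ?_
        have h2 : x - (y + u) = (x - y) - u := by abel
        by_cases h : (x - y) - u ∈ L <;> simp [hf, h2, h]
      rw [h1, tile (x - y)]
      norm_num
    -- Work in the group algebra
    set A : AddMonoidAlgebra (ZMod p) (Fin n → ℤ) :=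
      ∑ u ∈ V, AddMonoidAlgebra.single u (1 : ZMod p) with hA
    haveI : CharP (AddMonoidAlgebra (ZMod p) (Fin n → ℤ)) p := by
      refine charP_of_injective_ringHom
        (f := AddMonoidAlgebra.singleZeroRingHom (R := ZMod p) (M := Fin n → ℤ)) ?_ p
      intro a b h
      have := congrArg (fun z : AddMonoidAlgebra (ZMod p) (Fin n → ℤ) => z.coeff 0) h
      simpa [AddMonoidAlgebra.singleZeroRingHom] using this
    -- Frobenius: A^p = ∑ single (p•u) 1
    have hAp : A ^ p = ∑ u ∈ V, AddMonoidAlgebra.single (p • u) (1 : ZMod p) := by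
      rw [hA, sum_pow_char]
      exact Finset.sum_congr rfl fun u _ => by
        rw [AddMonoidAlgebra.single_pow, one_pow]
    -- Phi f (C * A) = Phi 1 C by the tiling property
    have main : ∀ C : AddMonoidAlgebra (ZMod p) (Fin n → ℤ),
        Phi f (C * A) = Phi (fun _ => 1) C := by
      intro C
      rw [hA, Phi_mul_A]
      have h1 : ∀ u, Phi (fun g => f (g + u)) C = ∑ g ∈ C.coeff.support, C.coeff g * f (g + u) :=
        fun u => Phi_apply _ _
      simp only [h1]
      rw [Finset.sum_comm, Phi_apply]
      refine Finset.sum_congr rfl fun g _ => ?_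
      rw [← Finset.mul_sum, tile' g, mul_one]
    -- Phi (const 1) (C * A) = 0, since |V| = p
    have aug : ∀ C : AddMonoidAlgebra (ZMod p) (Fin n → ℤ),
        Phi (fun _ => (1 : ZMod p)) (C * A) = 0 := by
      intro C
      rw [hA, Phi_mul_A, Finset.sum_const, hcard]
      simp [nsmul_eq_mul, ZMod.natCast_self]
    -- combine: Phi f (A^p) = 0
    have hzero : Phi f (A ^ p) = 0 := by
      have h2 : 2 ≤ p := hp.two_le
      have hdecomp : A ^ p = A ^ (p - 2) * A * A := by
        rw [← pow_succ, ← pow_succ]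
        congr 1
        omega
      rw [hdecomp, main, aug]
    -- hence the count is divisible by p
    have hsum : ∑ u ∈ V, f (p • u) = (0 : ZMod p) := by
      rw [← hzero, hAp, Phi_finset_sum]
      exact (Finset.sum_congr rfl fun u _ => by rw [Phi_single, one_mul]).symm
    have hdvd : p ∣ (V.filter (fun u => x - p • u ∈ L)).card := by
      have hc : ((V.filter (fun u => x - p • u ∈ L)).card : ZMod p) = 0 := by
        rw [← hsum, Finset.card_filter, Nat.cast_sum]
        refine Finset.sum_congr rfl fun u _ => ?_
        by_cases h : x - p • u ∈ L <;> simp [hf, h]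
      exact (ZMod.natCast_eq_zero_iff _ _).1 hc
    have hle : (V.filter (fun u => x - p • u ∈ L)).card ≤ p :=
      hcard ▸ Finset.card_filter_le _ _
    intro v' hv' w' hw'
    rcases Nat.eq_zero_or_pos (V.filter (fun u => x - p • u ∈ L)).card with h0 | hpos
    · -- no u works: both sides false
      have hempty : V.filter (fun u => x - p • u ∈ L) = ∅ := Finset.card_eq_zero.1 h0
      constructor <;> intro hmem
      · have h : v' ∈ V.filter (fun u => x - p • u ∈ L) := Finset.mem_filter.2 ⟨hv', hmem⟩
        rw [hempty] at h
        exact absurd h (Finset.notMem_empty _)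
      · have h : w' ∈ V.filter (fun u => x - p • u ∈ L) := Finset.mem_filter.2 ⟨hw', hmem⟩
        rw [hempty] at h
        exact absurd h (Finset.notMem_empty _)
    · -- all u work: both sides true
      have hcardeq : (V.filter (fun u => x - p • u ∈ L)).card = p :=
        le_antisymm hle (Nat.le_of_dvd hpos hdvd)
      have hall : V.filter (fun u => x - p • u ∈ L) = V := by
        refine Finset.eq_of_subset_of_card_le (Finset.filter_subset _ _) ?_
        rw [hcard, hcardeq]
      have hmem : ∀ u ∈ V, x - p • u ∈ L := by
        intro u hu
        have h : u ∈ V.filter (fun u => x - p • u ∈ L) := by rw [hall]; exact hu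
        exact (Finset.mem_filter.1 h).2
      exact ⟨fun _ => hmem w' hw', fun _ => hmem v' hv'⟩
  intro x
  have hk := key (x + p • v) v hv w hw
  have h1 : x + p • v - p • v = x := by abel
  have h2 : x + p • v - p • w = x + (p : ℤ) • (v - w) := by
    have h3 : ∀ u : Fin n → ℤ, (p : ℤ) • u = p • u := fun u => natCast_zsmul u p
    rw [smul_sub, h3 v, h3 w]
    abel
  rw [h1, h2] at hk
  exact hk
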